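/- For every integer n ≥ 1, the set of basis indices v ∈ ℕ × ℕ × Fin 3 such that the v-coefficient of Tⁿ e(v) is nonzero is finite. In particular the diagonal sum Σ_v ⟨Tⁿ e(v), e(v)⟩ is a well-defined rational number. -/

import Mathlib

/-!
The type-1 edge-transfer operator `T` of the quotient
`PGL(3,F_q[t]) \ B` of the Bruhat–Tits building `B` of `PGL(3,F_q((t⁻¹)))`,
acting on the free ℚ-module with basis `ℕ × ℕ × Fin 3`
(the third coordinate `0,1,2` encodes the edge label `1,2,3`).
-/

/-- Basis vectors of the free module `(ℕ × ℕ × Fin 3) →₀ ℚ`. -/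
noncomputable def ee (v : ℕ × ℕ × Fin 3) : (ℕ × ℕ × Fin 3) →₀ ℚ :=
  Finsupp.single v 1

/-- The value of the transfer operator on basis vectors. -/
noncomputable def Tstep (q : ℕ) : ℕ × ℕ × Fin 3 → ((ℕ × ℕ × Fin 3) →₀ ℚ)
  | (0, n, ⟨0, _⟩) =>
      ((q : ℚ) ^ 2 - 1) • ee (0, n, 1) + ee (0, n + 1, 0)
  | (m + 1, n, ⟨0, _⟩) =>
      ((q : ℚ) - 1) • ee (m + 1, n, 1) + ((q : ℚ) ^ 2 - (q : ℚ)) • ee (m, n + 1, 2) +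
        ee (m + 1, n + 1, 0)
  | (m, 0, ⟨1, _⟩) =>
      ((q : ℚ) ^ 2 - (q : ℚ)) • ee (m, 0, 2) + (q : ℚ) • ee (m + 1, 0, 0)
  | (m, n + 1, ⟨1, _⟩) =>
      ((q : ℚ) ^ 2 - (q : ℚ)) • ee (m, n + 1, 2) + (q : ℚ) • ee (m + 1, n, 1)
  | (0, 0, ⟨2, _⟩) => ((q : ℚ) ^ 2) • ee (0, 0, 0)
  | (0, n + 1, ⟨2, _⟩) => ((q : ℚ) ^ 2) • ee (0, n, 1)
  | (m + 1, n, ⟨2, _⟩) => ((q : ℚ) ^ 2) • ee (m, n, 2)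
  | (_, _, ⟨i + 3, h⟩) => absurd h (by omega)

/-- The type-1 edge transfer operator `T` as a ℚ-linear endomorphism. -/
noncomputable def Tedge (q : ℕ) : Module.End ℚ ((ℕ × ℕ × Fin 3) →₀ ℚ) :=
  Finsupp.lift ((ℕ × ℕ × Fin 3) →₀ ℚ) ℚ (ℕ × ℕ × Fin 3) (Tstep q)



/-! ### Auxiliary material -/

abbrev St := ℕ × ℕ × Fin 3

lemma Tstep_eq1 (q n : ℕ) : Tstep q (0, n, (0 : Fin 3)) =
    ((q : ℚ) ^ 2 - 1) • ee (0, n, 1) + ee (0, n + 1, 0) := by cases n <;> rfl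
lemma Tstep_eq2 (q m n : ℕ) : Tstep q (m + 1, n, (0 : Fin 3)) =
    ((q : ℚ) - 1) • ee (m + 1, n, 1) + ((q : ℚ) ^ 2 - (q : ℚ)) • ee (m, n + 1, 2) +
      ee (m + 1, n + 1, 0) := by cases m <;> cases n <;> rfl
lemma Tstep_eq3 (q m : ℕ) : Tstep q (m, 0, (1 : Fin 3)) =
    ((q : ℚ) ^ 2 - (q : ℚ)) • ee (m, 0, 2) + (q : ℚ) • ee (m + 1, 0, 0) := by cases m <;> rfl
lemma Tstep_eq4 (q m n : ℕ) : Tstep q (m, n + 1, (1 : Fin 3)) =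
    ((q : ℚ) ^ 2 - (q : ℚ)) • ee (m, n + 1, 2) + (q : ℚ) • ee (m + 1, n, 1) := by
  cases m <;> cases n <;> rfl
lemma Tstep_eq5 (q : ℕ) : Tstep q (0, 0, (2 : Fin 3)) = ((q : ℚ) ^ 2) • ee (0, 0, 0) := rfl
lemma Tstep_eq6 (q n : ℕ) : Tstep q (0, n + 1, (2 : Fin 3)) = ((q : ℚ) ^ 2) • ee (0, n, 1) := by
  cases n <;> rfl
lemma Tstep_eq7 (q m n : ℕ) : Tstep q (m + 1, n, (2 : Fin 3)) = ((q : ℚ) ^ 2) • ee (m, n, 2) := by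
  cases m <;> cases n <;> rfl

/-- The abstract step (edge) relation underlying `Tstep`. -/
inductive Stp : St → St → Prop
  | e01 (m n : ℕ) : Stp (m, n, 0) (m, n, 1)
  | e00 (m n : ℕ) : Stp (m, n, 0) (m, n + 1, 0)
  | e02 (m n : ℕ) : Stp (m + 1, n, 0) (m, n + 1, 2)
  | e12 (m n : ℕ) : Stp (m, n, 1) (m, n, 2)
  | e10 (m : ℕ) : Stp (m, 0, 1) (m + 1, 0, 0)
  | e11 (m n : ℕ) : Stp (m, n + 1, 1) (m + 1, n, 1)
  | e20 : Stp (0, 0, 2) (0, 0, 0)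
  | e21 (n : ℕ) : Stp (0, n + 1, 2) (0, n, 1)
  | e22 (m n : ℕ) : Stp (m + 1, n, 2) (m, n, 2)

lemma ee_apply_ne {t w : St} (h : t ≠ w) : ee t w = 0 :=
  Finsupp.single_eq_of_ne' h

lemma supp_Tstep (q : ℕ) (v w : St) (h : Tstep q v w ≠ 0) : Stp v w := by
  obtain ⟨m, n, i⟩ := v
  obtain ⟨iv, hiv⟩ := i
  interval_cases iv
  · have hI : (⟨0, hiv⟩ : Fin 3) = 0 := rfl
    rw [hI] at h ⊢
    rcases m with _ | m
    · rw [Tstep_eq1] at h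
      rcases eq_or_ne w (0, n, 1) with rfl | h1
      · exact Stp.e01 0 n
      rcases eq_or_ne w (0, n + 1, 0) with rfl | h2
      · exact Stp.e00 0 n
      exact absurd (by rw [Finsupp.add_apply, Finsupp.smul_apply,
        ee_apply_ne (Ne.symm h1), ee_apply_ne (Ne.symm h2)]; simp) h
    · rw [Tstep_eq2] at h
      rcases eq_or_ne w (m + 1, n, 1) with rfl | h1
      · exact Stp.e01 (m + 1) n
      rcases eq_or_ne w (m, n + 1, 2) with rfl | h2
      · exact Stp.e02 m n
      rcases eq_or_ne w (m + 1, n + 1, 0) with rfl | h3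
      · exact Stp.e00 (m + 1) n
      exact absurd (by rw [Finsupp.add_apply, Finsupp.add_apply, Finsupp.smul_apply,
        Finsupp.smul_apply, ee_apply_ne (Ne.symm h1), ee_apply_ne (Ne.symm h2),
        ee_apply_ne (Ne.symm h3)]; simp) h
  · have hI : (⟨1, hiv⟩ : Fin 3) = 1 := rfl
    rw [hI] at h ⊢
    rcases n with _ | n
    · rw [Tstep_eq3] at h
      rcases eq_or_ne w (m, 0, 2) with rfl | h1
      · exact Stp.e12 m 0
      rcases eq_or_ne w (m + 1, 0, 0) with rfl | h2
      · exact Stp.e10 m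
      exact absurd (by rw [Finsupp.add_apply, Finsupp.smul_apply, Finsupp.smul_apply,
        ee_apply_ne (Ne.symm h1), ee_apply_ne (Ne.symm h2)]; simp) h
    · rw [Tstep_eq4] at h
      rcases eq_or_ne w (m, n + 1, 2) with rfl | h1
      · exact Stp.e12 m (n + 1)
      rcases eq_or_ne w (m + 1, n, 1) with rfl | h2
      · exact Stp.e11 m n
      exact absurd (by rw [Finsupp.add_apply, Finsupp.smul_apply, Finsupp.smul_apply,
        ee_apply_ne (Ne.symm h1), ee_apply_ne (Ne.symm h2)]; simp) h
  · have hI : (⟨2, hiv⟩ : Fin 3) = 2 := rfl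
    rw [hI] at h ⊢
    rcases m with _ | m
    · rcases n with _ | n
      · rw [Tstep_eq5] at h
        rcases eq_or_ne w (0, 0, 0) with rfl | h1
        · exact Stp.e20
        exact absurd (by rw [Finsupp.smul_apply, ee_apply_ne (Ne.symm h1)]; simp) h
      · rw [Tstep_eq6] at h
        rcases eq_or_ne w (0, n, 1) with rfl | h1
        · exact Stp.e21 n
        exact absurd (by rw [Finsupp.smul_apply, ee_apply_ne (Ne.symm h1)]; simp) h
    · rw [Tstep_eq7] at h
      rcases eq_or_ne w (m, n, 2) with rfl | h1
      · exact Stp.e22 m n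
      exact absurd (by rw [Finsupp.smul_apply, ee_apply_ne (Ne.symm h1)]; simp) h

/-- Walks of length `k` for the step relation. -/
def ReachN : ℕ → St → St → Prop
  | 0, v, w => v = w
  | k + 1, v, w => ∃ u, Stp v u ∧ ReachN k u w

lemma Tedge_apply_ee (q : ℕ) (v : St) : Tedge q (ee v) = Tstep q v := by
  simp [Tedge, ee, Finsupp.lift_apply, Finsupp.sum_single_index]

lemma reach (q : ℕ) : ∀ (k : ℕ) (v w : St), ((Tedge q ^ k) (ee v)) w ≠ 0 → ReachN k v w := by
  intro k
  induction k with
  | zero =>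
    intro v w h
    rw [pow_zero] at h
    replace h : ee v w ≠ 0 := by simpa using h
    show v = w
    by_contra hne
    exact h (ee_apply_ne hne)
  | succ k ih =>
    intro v w h
    rw [pow_succ, Module.End.mul_apply, Tedge_apply_ee] at h
    set x := Tstep q v with hx
    have hdec : (Tedge q ^ k) x = x.sum fun u c => c • (Tedge q ^ k) (ee u) := by
      conv_lhs => rw [← Finsupp.sum_single x]
      rw [map_finsuppSum]
      refine Finset.sum_congr rfl fun u _ => ?_
      dsimp only
      rw [← map_smul]
      congr 1
      simp [ee, Finsupp.smul_single]
    rw [hdec, Finsupp.sum, Finsupp.finset_sum_apply] at h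
    obtain ⟨u, hu, hne⟩ := Finset.exists_ne_zero_of_sum_ne_zero h
    rw [Finsupp.smul_apply, smul_eq_mul] at hne
    have hxu : x u ≠ 0 := fun h0 => hne (by rw [h0, zero_mul])
    have hTu : ((Tedge q ^ k) (ee u)) w ≠ 0 := fun h0 => hne (by rw [h0, mul_zero])
    exact ⟨u, supp_Tstep q v u hxu, ih u w hTu⟩

lemma Stp_drift {u u' : St} (h : Stp u u') :
    u'.1 ≤ u.1 + 1 ∧ u.1 ≤ u'.1 + 1 ∧ u'.2.1 ≤ u.2.1 + 1 ∧ u.2.1 ≤ u'.2.1 + 1 := by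
  cases h <;> dsimp <;> omega

/-- A measure strictly decreasing along steps whose source has positive second coordinate. -/
def mu (B : ℤ) (v : St) : ℤ :=
  if v.2.2.val = 0 then (4 * B ^ 2 + 3 * B + 2) - v.2.1
  else 4 * ((v.1 : ℤ) + v.2.1) ^ 2 + 2 * v.2.1 + (if v.2.2.val = 1 then 1 else 0)

lemma mu_step {B : ℤ} {u u' : St} (h : Stp u u') (hn : 1 ≤ u.2.1)
    (hB : (u.1 : ℤ) + u.2.1 ≤ B) (hB' : (u'.1 : ℤ) + u'.2.1 ≤ B) :
    mu B u' < mu B u := by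
  cases h with
  | e01 m n =>
    simp only [mu] at *; norm_num at *; push_cast at *
    have hBp : (0:ℤ) ≤ B + ((m : ℤ) + n) := by
      have := Int.natCast_nonneg m
      have := Int.natCast_nonneg n
      linarith
    nlinarith [mul_nonneg (sub_nonneg.2 hB) hBp, Int.natCast_nonneg m, Int.natCast_nonneg n]
  | e00 m n => simp only [mu] at *; norm_num at *
  | e02 m n =>
    simp only [mu] at *; norm_num at *; push_cast at *
    have hBp : (0:ℤ) ≤ B + ((m : ℤ) + n + 1) := by
      have := Int.natCast_nonneg m
      have := Int.natCast_nonneg n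
      linarith
    have hB'' : (m : ℤ) + n + 1 ≤ B := by linarith
    nlinarith [mul_nonneg (sub_nonneg.2 hB'') hBp, Int.natCast_nonneg m, Int.natCast_nonneg n]
  | e12 m n => simp only [mu] at *; norm_num at *
  | e10 m => simp only [mu] at *; norm_num at *
  | e11 m n =>
    simp only [mu] at *; norm_num at *; push_cast at *
    nlinarith [Int.natCast_nonneg m, Int.natCast_nonneg n]
  | e20 => simp only [mu] at *; norm_num at *
  | e21 n =>
    simp only [mu] at *; norm_num at *; push_cast at *
    nlinarith [Int.natCast_nonneg n]
  | e22 m n =>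
    simp only [mu] at *; norm_num at *; push_cast at *
    nlinarith [Int.natCast_nonneg m, Int.natCast_nonneg n]

/-- A measure strictly decreasing along steps whose source has positive first coordinate. -/
def nu (B : ℤ) (v : St) : ℤ :=
  if v.2.2.val = 2 then (v.1 : ℤ)
  else (7 * B + 2) - (4 * v.1 + 2 * v.2.1) - (if v.2.2.val = 1 then 1 else 0)

lemma nu_step {B : ℤ} {u u' : St} (h : Stp u u') (hm : 1 ≤ u.1)
    (hB : (u.1 : ℤ) + u.2.1 ≤ B) (hB' : (u'.1 : ℤ) + u'.2.1 ≤ B) :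
    nu B u' < nu B u := by
  cases h <;>
    (simp only [nu] at *) <;>
    norm_num at * <;>
    omega

lemma chain_mu (B : ℤ) : ∀ (k : ℕ) (u w : St), ReachN k u w → (k : ℤ) ≤ u.2.1 →
    (u.1 : ℤ) + u.2.1 + 2 * k ≤ B → mu B w + k ≤ mu B u := by
  intro k
  induction k with
  | zero => intro u w h _ _; cases h; simp
  | succ k ih =>
    intro u w h hk hB
    obtain ⟨u₁, hs, hr⟩ := h
    obtain ⟨d1, d2, d3, d4⟩ := Stp_drift hs
    have h1 : mu B u₁ < mu B u :=
      mu_step hs (by omega) (by push_cast at hB ⊢; omega) (by push_cast at hB ⊢; omega)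
    have h2 : mu B w + k ≤ mu B u₁ :=
      ih u₁ w hr (by push_cast at hk ⊢; omega) (by push_cast at hB ⊢; omega)
    push_cast
    omega

lemma chain_nu (B : ℤ) : ∀ (k : ℕ) (u w : St), ReachN k u w → (k : ℤ) ≤ u.1 →
    (u.1 : ℤ) + u.2.1 + 2 * k ≤ B → nu B w + k ≤ nu B u := by
  intro k
  induction k with
  | zero => intro u w h _ _; cases h; simp
  | succ k ih =>
    intro u w h hk hB
    obtain ⟨u₁, hs, hr⟩ := h
    obtain ⟨d1, d2, d3, d4⟩ := Stp_drift hs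
    have h1 : nu B u₁ < nu B u :=
      nu_step hs (by omega) (by push_cast at hB ⊢; omega) (by push_cast at hB ⊢; omega)
    have h2 : nu B w + k ≤ nu B u₁ :=
      ih u₁ w hr (by push_cast at hk ⊢; omega) (by push_cast at hB ⊢; omega)
    push_cast
    omega

lemma closed_bound (k : ℕ) (hk : 1 ≤ k) (v : St) (h : ReachN k v v) :
    v.1 ≤ k ∧ v.2.1 ≤ k := by
  constructor
  · by_contra hm
    push_neg at hm
    have := chain_nu ((v.1 : ℤ) + v.2.1 + 2 * k) k v v h (by push_cast; omega)
      (by push_cast; omega)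
    omega
  · by_contra hn2
    push_neg at hn2
    have := chain_mu ((v.1 : ℤ) + v.2.1 + 2 * k) k v v h (by push_cast; omega)
      (by push_cast; omega)
    omega

/-- For every `n ≥ 1`, the set of basis indices `v` such that the `v`-coefficient of
`Tⁿ e(v)` is nonzero is finite; in particular the diagonal sum
`Σ_v ⟨Tⁿ e(v), e(v)⟩` is a well-defined rational number (here expressed via `finsum`). -/
theorem diagonal_support_finite (q : ℕ) (hq : 2 ≤ q) (n : ℕ) (hn : 1 ≤ n) :
    {v : ℕ × ℕ × Fin 3 | ((Tedge q ^ n) (ee v)) v ≠ 0}.Finite := by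
  have hfin : (Set.Iic n ×ˢ (Set.Iic n ×ˢ (Set.univ : Set (Fin 3)))).Finite :=
    (Set.finite_Iic n).prod ((Set.finite_Iic n).prod Set.finite_univ)
  refine hfin.subset fun v hv => ?_
  have hr := reach q n v v hv
  have hb := closed_bound n hn v hr
  exact ⟨hb.1, hb.2, trivial⟩
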